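/- Upper bound on the completely bounded trace norm from a Stinespring pair: Let X, Y, Z be finite-dimensional complex vector spaces and let A, B ∈ L(X, Y⊗Z) be a Stinespring pair for a super-operator Φ : L(X) → L(Y), meaning Φ(X) = Tr_Z(A X B*) for all X ∈ L(X). Then |||Φ|||₁ ≤ ‖A‖_∞ · ‖B‖_∞, where ‖·‖_∞ denotes the spectral norm. -/

import Mathlib

open Matrix
open scoped Kronecker ComplexOrder

noncomputable section

/-- The square root of a positive semidefinite matrix, as `Matrix.PosSemidef.sqrt` was defined
in the older Mathlib (removed since). -/
def Matrix.PosSemidef.sqrt {n : Type*} [Fintype n] [DecidableEq n] {A : Matrix n n ℂ}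
    (hA : A.PosSemidef) : Matrix n n ℂ :=
  (hA.1.eigenvectorUnitary : Matrix n n ℂ) * diagonal ((↑) ∘ (√·) ∘ hA.1.eigenvalues) *
    (star hA.1.eigenvectorUnitary : Matrix n n ℂ)

/-- The trace norm `‖A‖₁ = Tr √(A* A)`. -/
def traceNorm {m n : Type*} [Fintype m] [Fintype n] [DecidableEq n]
    (A : Matrix m n ℂ) : ℝ :=
  (Matrix.posSemidef_conjTranspose_mul_self A).sqrt.trace.re

/-- The spectral norm (operator norm w.r.t. Euclidean norms). -/
def specNorm {m n : Type*} [Fintype m] [Fintype n] [DecidableEq n]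
    (A : Matrix m n ℂ) : ℝ :=
  ‖LinearMap.toContinuousLinearMap (Matrix.toEuclideanLin A)‖

/-- The Frobenius norm `‖A‖₂ = √Tr(A*A)`. -/
def frobeniusNorm {m n : Type*} [Fintype m] [Fintype n] (A : Matrix m n ℂ) : ℝ :=
  Real.sqrt ((Aᴴ * A).trace.re)

/-- Partial trace over the first tensor factor. -/
def ptraceFst {y z : Type*} [Fintype y] (M : Matrix (y × z) (y × z) ℂ) : Matrix z z ℂ :=
  Matrix.of fun a b => ∑ i, M (i, a) (i, b)

/-- Partial trace over the second tensor factor. -/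
def ptraceSnd {y z : Type*} [Fintype z] (M : Matrix (y × z) (y × z) ℂ) : Matrix y y ℂ :=
  Matrix.of fun i j => ∑ a, M (i, a) (j, a)

/-- The super-operator `Φ ⊗ 1_{L(W)}`, for `Φ : L(X) → L(Y)` and `W` indexed by `k`. -/
def tensorId {n m : Type*} [Fintype n] [Fintype m] (k : Type*) [Fintype k]
    (Φ : Matrix n n ℂ →ₗ[ℂ] Matrix m m ℂ) :
    Matrix (n × k) (n × k) ℂ →ₗ[ℂ] Matrix (m × k) (m × k) ℂ where
  toFun M := Matrix.of fun p q => Φ (Matrix.of fun i j => M (i, p.2) (j, q.2)) p.1 q.1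
  map_add' M N := by
    ext p q
    show Φ (Matrix.of fun i j => (M + N) (i, p.2) (j, q.2)) p.1 q.1 =
      Φ (Matrix.of fun i j => M (i, p.2) (j, q.2)) p.1 q.1 +
        Φ (Matrix.of fun i j => N (i, p.2) (j, q.2)) p.1 q.1
    have h : (Matrix.of fun i j => (M + N) (i, p.2) (j, q.2)) =
        (Matrix.of fun i j => M (i, p.2) (j, q.2)) +
          (Matrix.of fun i j => N (i, p.2) (j, q.2)) := rfl
    rw [h, map_add]; rfl
  map_smul' c M := by
    ext p q
    show Φ (Matrix.of fun i j => (c • M) (i, p.2) (j, q.2)) p.1 q.1 =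
      (c • Φ (Matrix.of fun i j => M (i, p.2) (j, q.2))) p.1 q.1
    have h : (Matrix.of fun i j => (c • M) (i, p.2) (j, q.2)) =
        c • (Matrix.of fun i j => M (i, p.2) (j, q.2)) := rfl
    rw [h, _root_.map_smul]

/-- The trace norm induced on super-operators. -/
def inducedTraceNorm {a b : Type*} [Fintype a] [DecidableEq a] [Fintype b] [DecidableEq b]
    (Φ : Matrix a a ℂ →ₗ[ℂ] Matrix b b ℂ) : ℝ :=
  sSup {x : ℝ | ∃ X : Matrix a a ℂ, traceNorm X ≤ 1 ∧ x = traceNorm (Φ X)}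

/-- The completely bounded trace norm (diamond norm):
`sup over k ≥ 1 of ‖Φ ⊗ 1_{L(ℂᵏ)}‖₁`. -/
def diamondNorm {n m : Type*} [Fintype n] [DecidableEq n] [Fintype m] [DecidableEq m]
    (Φ : Matrix n n ℂ →ₗ[ℂ] Matrix m m ℂ) : ℝ :=
  ⨆ k : ℕ, inducedTraceNorm (tensorId (Fin (k + 1)) Φ)


/-- Choi–Jamiołkowski representation `J(Φ) = Σ_{i,j} Φ(E_{i,j}) ⊗ E_{i,j}`. -/
def choi {n m : Type*} [Fintype n] [DecidableEq n] [Fintype m]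
    (Φ : Matrix n n ℂ →ₗ[ℂ] Matrix m m ℂ) : Matrix (m × n) (m × n) ℂ :=
  ∑ i : n, ∑ j : n, (Φ (Matrix.single i j 1)) ⊗ₖ (Matrix.single i j 1)

/-- A quantum channel: a completely positive and trace-preserving super-operator. -/
def IsQuantumChannel {n m : Type*} [Fintype n] [Fintype m]
    (Φ : Matrix n n ℂ →ₗ[ℂ] Matrix m m ℂ) : Prop :=
  (∀ (k : ℕ) (P : Matrix (n × Fin k) (n × Fin k) ℂ), P.PosSemidef →
      (tensorId (Fin k) Φ P).PosSemidef) ∧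
    ∀ X : Matrix n n ℂ, (Φ X).trace = X.trace

open Classical in
/-- Square root of a positive semidefinite matrix (junk value `0` otherwise). -/
def matSqrt {r : Type*} [Fintype r] [DecidableEq r] (P : Matrix r r ℂ) : Matrix r r ℂ :=
  if h : P.PosSemidef then h.sqrt else 0

/-- The fidelity `F(P,Q) = ‖√P √Q‖₁`. -/
def fidelity {r : Type*} [Fintype r] [DecidableEq r] (P Q : Matrix r r ℂ) : ℝ :=
  traceNorm (matSqrt P * matSqrt Q)


namespace CBAux
open scoped Matrix.Norms.L2Operator
variable {α β γ ι : Type*} [Fintype α] [Fintype β] [Fintype γ] [Fintype ι]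

def nsq (x : ι → ℂ) : ℝ := ∑ i, ‖x i‖^2

lemma nsq_nonneg (x : ι → ℂ) : 0 ≤ nsq x :=
  Finset.sum_nonneg fun _ _ => sq_nonneg _

lemma euclid_norm (x : EuclideanSpace ℂ ι) : ‖x‖ = Real.sqrt (nsq x) := by
  rw [EuclideanSpace.norm_eq]; rfl

lemma nsq_mulVec_le [DecidableEq β] (A : Matrix α β ℂ) (x : β → ℂ) :
    nsq (A *ᵥ x) ≤ ‖A‖^2 * nsq x := by
  have h := A.l2_opNorm_mulVec ((WithLp.equiv 2 (β → ℂ)).symm x)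
  simp only [euclid_norm] at h
  have h' : Real.sqrt (nsq (A *ᵥ x)) ≤ ‖A‖ * Real.sqrt (nsq x) := h
  nlinarith [Real.sq_sqrt (nsq_nonneg (A *ᵥ x)), Real.sq_sqrt (nsq_nonneg x),
    Real.sqrt_nonneg (nsq (A *ᵥ x)), Real.sqrt_nonneg (nsq x), norm_nonneg A]

lemma norm_le_of_nsq [DecidableEq β] (A : Matrix α β ℂ) (c : ℝ) (hc : 0 ≤ c)
    (h : ∀ x : β → ℂ, nsq (A *ᵥ x) ≤ c^2 * nsq x) : ‖A‖ ≤ c := by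
  rw [Matrix.l2_opNorm_def]
  refine ContinuousLinearMap.opNorm_le_bound _ hc fun v => ?_
  have happ : (LinearEquiv.trans Matrix.toEuclideanLin LinearMap.toContinuousLinearMap A) v
      = (WithLp.equiv 2 (α → ℂ)).symm (A *ᵥ (WithLp.equiv 2 (β → ℂ)) v) := by
    rfl
  rw [happ, euclid_norm, euclid_norm v]
  have h' := h ((WithLp.equiv 2 (β → ℂ)) v)
  calc Real.sqrt (nsq (A *ᵥ (WithLp.equiv 2 (β → ℂ)) v))
      ≤ Real.sqrt (c^2 * nsq ((WithLp.equiv 2 (β → ℂ)) v)) := Real.sqrt_le_sqrt h'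
    _ = c * Real.sqrt (nsq ((WithLp.equiv 2 (β → ℂ)) v)) := by
        rw [Real.sqrt_mul (sq_nonneg c), Real.sqrt_sq hc]
    _ = c * Real.sqrt (nsq v) := rfl

lemma entry_le [DecidableEq β] (A : Matrix α β ℂ) (i : α) (j : β) : ‖A i j‖ ≤ ‖A‖ := by
  have h1 : nsq (A *ᵥ Pi.single j 1) ≤ ‖A‖^2 * nsq (Pi.single j (1:ℂ)) := nsq_mulVec_le A _
  have h2 : nsq (Pi.single j (1:ℂ)) = 1 := by
    unfold nsq
    rw [Fintype.sum_eq_single j (fun x hx => by simp [Pi.single_apply, hx])]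
    simp
  have h3 : ‖A i j‖^2 ≤ nsq (A *ᵥ Pi.single j 1) := by
    rw [Matrix.mulVec_single]
    have h4 := Finset.single_le_sum (f := fun k => ‖A k j * (1:ℂ)‖^2)
      (fun k _ => sq_nonneg _) (Finset.mem_univ i)
    simpa [nsq] using h4
  rw [h2, mul_one] at h1
  nlinarith [norm_nonneg A, norm_nonneg (A i j)]

lemma unitary_norm_le [DecidableEq ι] {U : Matrix ι ι ℂ} (hU : U ∈ Matrix.unitaryGroup ι ℂ) :
    ‖U‖ ≤ 1 := by
  have h1 : Uᴴ * U = 1 := by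
    rw [← Matrix.star_eq_conjTranspose]
    exact Matrix.mem_unitaryGroup_iff'.mp hU
  have h2 : ‖U‖ * ‖U‖ = ‖(1 : Matrix ι ι ℂ)‖ := by
    rw [← Matrix.l2_opNorm_conjTranspose_mul_self, h1]
  have h3 : ‖(1 : Matrix ι ι ℂ)‖ ≤ 1 := by
    rw [Matrix.cstar_norm_def, _root_.map_one]
    exact ContinuousLinearMap.norm_id_le
  nlinarith [norm_nonneg U]

section P
variable {ι : Type*} [Fintype ι] [DecidableEq ι]

lemma polar (N : Matrix ι ι ℂ) :
    ∃ W : Matrix ι ι ℂ, ‖W‖ ≤ 1 ∧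
      Wᴴ * N = (Matrix.posSemidef_conjTranspose_mul_self N).sqrt ∧
      N = W * (Matrix.posSemidef_conjTranspose_mul_self N).sqrt := by
  have hH := Matrix.posSemidef_conjTranspose_mul_self N
  have h1 := hH.1
  set U : Matrix ι ι ℂ := ↑h1.eigenvectorUnitary with hUdef
  set ev := h1.eigenvalues with hevdef
  have hev : ∀ i, 0 ≤ ev i := hH.eigenvalues_nonneg
  have hUU : Uᴴ * U = 1 := by
    rw [← Matrix.star_eq_conjTranspose]
    exact Matrix.mem_unitaryGroup_iff'.mp h1.eigenvectorUnitary.2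
  have hUU' : U * Uᴴ = 1 := by
    rw [← Matrix.star_eq_conjTranspose]
    exact Matrix.mem_unitaryGroup_iff.mp h1.eigenvectorUnitary.2
  have hUUc : ∀ X : Matrix ι ι ℂ, Uᴴ * (U * X) = X := fun X => by
    rw [← mul_assoc, hUU, one_mul]
  have hUn : ‖U‖ ≤ 1 := unitary_norm_le h1.eigenvectorUnitary.2
  have hUHn : ‖Uᴴ‖ ≤ 1 := by rw [Matrix.l2_opNorm_conjTranspose]; exact hUn
  set Dev : Matrix ι ι ℂ := diagonal (Complex.ofReal ∘ ev) with hDev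
  set Dsq : Matrix ι ι ℂ := diagonal (Complex.ofReal ∘ Real.sqrt ∘ ev) with hDsq
  have hspec : Nᴴ * N = U * (Dev * Uᴴ) := by
    rw [← mul_assoc, ← Matrix.star_eq_conjTranspose]; exact h1.spectral_theorem
  -- sqrt identification
  have hDsqPSD : Dsq.PosSemidef := by
    rw [hDsq]
    refine Matrix.posSemidef_diagonal_iff.mpr fun i => ?_
    simp only [Function.comp_apply]
    exact Complex.zero_le_real.2 (Real.sqrt_nonneg _)
  have hSpsd : (U * (Dsq * Uᴴ)).PosSemidef := by
    have := hDsqPSD.mul_mul_conjTranspose_same U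
    rwa [mul_assoc] at this
  have hS2 : (U * (Dsq * Uᴴ)) ^ 2 = Nᴴ * N := by
    rw [pow_two, hspec]
    calc U * (Dsq * Uᴴ) * (U * (Dsq * Uᴴ))
        = U * (Dsq * (Uᴴ * (U * (Dsq * Uᴴ)))) := by simp only [mul_assoc]
      _ = U * (Dsq * (Dsq * Uᴴ)) := by rw [hUUc]
      _ = U * ((Dsq * Dsq) * Uᴴ) := by simp only [mul_assoc]
      _ = U * (Dev * Uᴴ) := by
          congr 2
          rw [hDsq, hDev, Matrix.diagonal_mul_diagonal]
          apply congrArg Matrix.diagonal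
          funext i
          simp only [Pi.mul_apply, Function.comp_apply, ← Complex.ofReal_mul,
            Real.mul_self_sqrt (hev i)]
  have hsqrt : hH.sqrt = U * (Dsq * Uᴴ) := by
    show U * Dsq * Uᴴ = _; exact Matrix.mul_assoc _ _ _
  -- pseudo inverse diagonal
  set dinv : ι → ℂ := fun i => if ev i = 0 then 0 else ((Real.sqrt (ev i) : ℂ))⁻¹ with hdinv
  set p : ι → ℂ := fun i => if ev i = 0 then 0 else 1 with hp
  set Di : Matrix ι ι ℂ := diagonal dinv with hDi
  set Dp : Matrix ι ι ℂ := diagonal p with hDp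
  have key1 : Di * Dev = Dsq := by
    rw [hDi, hDev, hDsq, Matrix.diagonal_mul_diagonal]
    apply congrArg Matrix.diagonal
    funext i
    simp only [hdinv, hp, Pi.mul_apply, Function.comp_apply]
    by_cases h : ev i = 0
    · simp [h]
    · have hpos : (0:ℝ) < ev i := lt_of_le_of_ne (hev i) (Ne.symm h)
      have he : (ev i : ℂ) = (Real.sqrt (ev i) : ℂ) * (Real.sqrt (ev i) : ℂ) := by
        rw [← Complex.ofReal_mul, Real.mul_self_sqrt (hev i)]
      have hs : ((Real.sqrt (ev i) : ℂ)) ≠ 0 := by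
        exact_mod_cast (Real.sqrt_pos.mpr hpos).ne'
      simp only [h, if_false]
      rw [he]
      field_simp
  have key2 : Di * Dsq = Dp := by
    rw [hDi, hDsq, hDp, Matrix.diagonal_mul_diagonal]
    apply congrArg Matrix.diagonal
    funext i
    simp only [hdinv, hp, Pi.mul_apply, Function.comp_apply]
    by_cases h : ev i = 0
    · simp [h]
    · have hpos : (0:ℝ) < ev i := lt_of_le_of_ne (hev i) (Ne.symm h)
      have hs : ((Real.sqrt (ev i) : ℂ)) ≠ 0 := by
        exact_mod_cast (Real.sqrt_pos.mpr hpos).ne'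
      simp only [h, if_false]
      field_simp
  have key3 : Di * Dev * Di = Dp := by
    rw [key1]
    calc Dsq * Di = Di * Dsq := by
          rw [hDi, hDsq, Matrix.diagonal_mul_diagonal, Matrix.diagonal_mul_diagonal]
          apply congrArg Matrix.diagonal
          funext i
          exact mul_comm _ _
      _ = Dp := key2
  have hDiH : Diᴴ = Di := by
    rw [hDi, Matrix.diagonal_conjTranspose]
    apply congrArg Matrix.diagonal
    funext i
    simp only [Pi.star_apply, hdinv]
    by_cases h : ev i = 0 <;>
      simp [h, ← Complex.ofReal_inv, Complex.conj_ofReal]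
  have hDpH : Dpᴴ = Dp := by
    rw [hDp, Matrix.diagonal_conjTranspose]
    apply congrArg Matrix.diagonal
    funext i
    simp only [Pi.star_apply, hp]
    by_cases h : ev i = 0 <;> simp [h]
  have hDpp : Dp * Dp = Dp := by
    rw [hDp, Matrix.diagonal_mul_diagonal]
    apply congrArg Matrix.diagonal
    funext i
    simp only [Pi.mul_apply, hp]
    by_cases h : ev i = 0 <;> simp [h]
  set W : Matrix ι ι ℂ := N * (U * (Di * Uᴴ)) with hW
  have hWH : Wᴴ = U * (Di * (Uᴴ * Nᴴ)) := by
    rw [hW]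
    simp only [Matrix.conjTranspose_mul, Matrix.conjTranspose_conjTranspose, hDiH]
    simp only [mul_assoc]
  -- (a)
  have ha : Wᴴ * N = hH.sqrt := by
    rw [hWH, hsqrt]
    calc U * (Di * (Uᴴ * Nᴴ)) * N = U * (Di * (Uᴴ * (Nᴴ * N))) := by simp only [mul_assoc]
      _ = U * (Di * (Uᴴ * (U * (Dev * Uᴴ)))) := by rw [hspec]
      _ = U * (Di * (Dev * Uᴴ)) := by rw [hUUc]
      _ = U * ((Di * Dev) * Uᴴ) := by simp only [mul_assoc]
      _ = U * (Dsq * Uᴴ) := by rw [key1]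
  -- G facts
  set G : Matrix ι ι ℂ := N * U with hG
  have hGG : Gᴴ * G = Dev := by
    rw [hG, Matrix.conjTranspose_mul]
    calc Uᴴ * Nᴴ * (N * U) = Uᴴ * ((Nᴴ * N) * U) := by simp only [mul_assoc]
      _ = Uᴴ * (U * (Dev * Uᴴ) * U) := by rw [hspec]
      _ = Dev * (Uᴴ * U) := by simp only [mul_assoc, hUUc]
      _ = Dev := by rw [hUU, mul_one]
  have hGP : G * Dp = G := by
    ext a i
    rw [hDp, Matrix.mul_diagonal]
    by_cases h : ev i = 0
    · simp only [hp, h, if_true, mul_zero]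
      have hcol := congrArg (fun X => (X i i).re) hGG
      simp only [Matrix.mul_apply, Matrix.conjTranspose_apply, hDev,
        Matrix.diagonal_apply_eq, Function.comp_apply, h, Complex.ofReal_zero,
        Complex.zero_re] at hcol
      have hsum : ∀ k : ι, star (G k i) * G k i = ((Complex.normSq (G k i) : ℂ)) := by
        intro k
        rw [mul_comm]
        exact Complex.mul_conj _
      rw [Finset.sum_congr rfl (fun k _ => hsum k)] at hcol
      rw [Complex.re_sum] at hcol
      simp only [Complex.ofReal_re] at hcol
      have hzero := (Finset.sum_eq_zero_iff_of_nonneg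
        (fun k _ => Complex.normSq_nonneg (G k i))).mp hcol a (Finset.mem_univ a)
      rw [Complex.normSq_eq_zero] at hzero
      rw [hzero]
    · simp [hp, h]
  -- (b)
  have hb : N = W * hH.sqrt := by
    rw [hW, hsqrt]
    calc N = G * Uᴴ := by rw [hG, mul_assoc, hUU', mul_one]
      _ = G * (Dp * Uᴴ) := by rw [← mul_assoc, hGP]
      _ = N * (U * (Dp * Uᴴ)) := by rw [hG]; simp only [mul_assoc]
      _ = N * (U * ((Di * Dsq) * Uᴴ)) := by rw [key2]
      _ = N * (U * (Di * (Dsq * Uᴴ))) := by simp only [mul_assoc]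
      _ = N * (U * (Di * (Uᴴ * (U * (Dsq * Uᴴ))))) := by rw [hUUc]
      _ = N * (U * (Di * Uᴴ)) * (U * (Dsq * Uᴴ)) := by simp only [mul_assoc]
  -- (c)
  have hWW : Wᴴ * W = U * (Dp * Uᴴ) := by
    rw [hWH, hW]
    calc U * (Di * (Uᴴ * Nᴴ)) * (N * (U * (Di * Uᴴ)))
        = U * (Di * (Uᴴ * ((Nᴴ * N) * (U * (Di * Uᴴ))))) := by simp only [mul_assoc]
      _ = U * (Di * (Uᴴ * (U * (Dev * Uᴴ) * (U * (Di * Uᴴ))))) := by rw [hspec]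
      _ = U * (Di * (Uᴴ * (U * (Dev * (Uᴴ * (U * (Di * Uᴴ))))))) := by simp only [mul_assoc]
      _ = U * (Di * (Dev * (Di * Uᴴ))) := by simp only [hUUc]
      _ = U * ((Di * Dev * Di) * Uᴴ) := by simp only [mul_assoc]
      _ = U * (Dp * Uᴴ) := by rw [key3]
  have hdpn : ‖Dp‖ ≤ 1 := by
    have h2 : ‖Dp‖ * ‖Dp‖ = ‖Dp‖ :=
      calc ‖Dp‖ * ‖Dp‖ = ‖Dpᴴ * Dp‖ := (Matrix.l2_opNorm_conjTranspose_mul_self Dp).symm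
        _ = ‖Dp‖ := by rw [hDpH, hDpp]
    nlinarith [norm_nonneg Dp]
  have hWn : ‖W‖ ≤ 1 := by
    have h2 : ‖W‖ * ‖W‖ = ‖Wᴴ * W‖ := (Matrix.l2_opNorm_conjTranspose_mul_self W).symm
    have h3 : ‖Wᴴ * W‖ ≤ 1 := by
      rw [hWW]
      calc ‖U * (Dp * Uᴴ)‖ ≤ ‖U‖ * ‖Dp * Uᴴ‖ := Matrix.l2_opNorm_mul _ _
        _ ≤ ‖U‖ * (‖Dp‖ * ‖Uᴴ‖) := by
            have := Matrix.l2_opNorm_mul Dp Uᴴ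
            nlinarith [norm_nonneg U]
        _ ≤ 1 := by
            nlinarith [norm_nonneg U, norm_nonneg Uᴴ, norm_nonneg Dp,
              mul_nonneg (norm_nonneg Dp) (norm_nonneg Uᴴ)]
    nlinarith [norm_nonneg W]
  exact ⟨W, hWn, ha, hb⟩

end P
section H
variable {ι : Type*} [Fintype ι] [DecidableEq ι]

lemma hoelder (C P : Matrix ι ι ℂ) (hP : P.PosSemidef) :
    ‖(C * P).trace‖ ≤ ‖C‖ * P.trace.re := by
  have h1 := hP.1
  set U : Matrix ι ι ℂ := ↑h1.eigenvectorUnitary with hUdef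
  set ev := h1.eigenvalues with hevdef
  have hspec : P = U * diagonal (Complex.ofReal ∘ ev) * Uᴴ := by
    rw [← Matrix.star_eq_conjTranspose]; exact h1.spectral_theorem
  have hUU : Uᴴ * U = 1 := by
    rw [← Matrix.star_eq_conjTranspose]
    exact Matrix.mem_unitaryGroup_iff'.mp h1.eigenvectorUnitary.2
  have hUn : ‖U‖ ≤ 1 := unitary_norm_le h1.eigenvectorUnitary.2
  have hUHn : ‖Uᴴ‖ ≤ 1 := by rw [Matrix.l2_opNorm_conjTranspose]; exact hUn
  have htr : (C * P).trace = ∑ i, (Uᴴ * C * U) i i * (ev i : ℂ) := by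
    calc (C * P).trace = (C * U * diagonal (Complex.ofReal ∘ ev) * Uᴴ).trace := by
          rw [hspec]; simp only [mul_assoc]
      _ = (Uᴴ * (C * U * diagonal (Complex.ofReal ∘ ev))).trace := by
          rw [Matrix.trace_mul_comm]
      _ = ((Uᴴ * C * U) * diagonal (Complex.ofReal ∘ ev)).trace := by
          simp only [mul_assoc]
      _ = ∑ i, (Uᴴ * C * U) i i * (ev i : ℂ) := by
          simp [Matrix.trace, Matrix.mul_diagonal, Matrix.diag]
  have htrP : P.trace.re = ∑ i, ev i := by
    have heq : P.trace = (diagonal (Complex.ofReal ∘ ev)).trace := by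
      calc P.trace = (U * diagonal (Complex.ofReal ∘ ev) * Uᴴ).trace := by rw [← hspec]
        _ = (Uᴴ * U * diagonal (Complex.ofReal ∘ ev)).trace := by
            rw [Matrix.trace_mul_cycle]
        _ = (diagonal (Complex.ofReal ∘ ev)).trace := by rw [hUU, one_mul]
    rw [heq]
    simp [Matrix.trace, Matrix.diag, Complex.re_sum]
  have hXn : ‖Uᴴ * C * U‖ ≤ ‖C‖ := by
    calc ‖Uᴴ * C * U‖ ≤ ‖Uᴴ * C‖ * ‖U‖ := Matrix.l2_opNorm_mul _ _
      _ ≤ ‖Uᴴ‖ * ‖C‖ * ‖U‖ := by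
          have := Matrix.l2_opNorm_mul Uᴴ C
          nlinarith [norm_nonneg U]
      _ ≤ ‖C‖ := by nlinarith [norm_nonneg C, norm_nonneg U, norm_nonneg Uᴴ,
          mul_nonneg (norm_nonneg Uᴴ) (norm_nonneg C)]
  rw [htr, htrP]
  calc ‖∑ i, (Uᴴ * C * U) i i * (ev i : ℂ)‖
      ≤ ∑ i, ‖(Uᴴ * C * U) i i * (ev i : ℂ)‖ :=
        norm_sum_le _ _
    _ ≤ ∑ i, ‖C‖ * ev i := by
        refine Finset.sum_le_sum fun i _ => ?_
        rw [norm_mul]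
        have h5 : ‖((ev i : ℂ))‖ = ev i := by
          rw [Complex.norm_real, Real.norm_eq_abs, abs_of_nonneg (hP.eigenvalues_nonneg i)]
        rw [h5]
        have h6 : ‖((Uᴴ * C * U) i i)‖ ≤ ‖C‖ :=
          le_trans (entry_le _ i i) hXn
        exact mul_le_mul_of_nonneg_right h6 (hP.eigenvalues_nonneg i)
    _ = ‖C‖ * ∑ i, ev i := by rw [Finset.mul_sum]

end H
section E
variable {α β γ α' : Type*} [Fintype α] [Fintype β] [Fintype γ] [Fintype α']

def rightExt (γ : Type*) [Fintype γ] [DecidableEq γ] (A : Matrix α β ℂ) :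
    Matrix (α × γ) (β × γ) ℂ :=
  Matrix.of fun x y => if x.2 = y.2 then A x.1 y.1 else 0

variable [DecidableEq γ]

lemma rightExt_mulVec (A : Matrix α β ℂ) (x : β × γ → ℂ) (a : α) (c : γ) :
    (rightExt γ A *ᵥ x) (a, c) = (A *ᵥ fun b => x (b, c)) a := by
  simp only [Matrix.mulVec, dotProduct, rightExt, Matrix.of_apply,
    Fintype.sum_prod_type, ite_mul, zero_mul]
  rw [Finset.sum_comm]
  rw [Finset.sum_congr rfl fun c' _ => Finset.sum_congr rfl fun b _ => rfl]
  simp [Finset.sum_ite_eq]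

lemma rightExt_norm_le [DecidableEq β] (A : Matrix α β ℂ) : ‖rightExt γ A‖ ≤ ‖A‖ := by
  refine norm_le_of_nsq _ _ (norm_nonneg _) fun x => ?_
  have h1 : nsq (rightExt γ A *ᵥ x) = ∑ c : γ, nsq (A *ᵥ fun b => x (b, c)) := by
    unfold nsq
    rw [Fintype.sum_prod_type, Finset.sum_comm]
    exact Finset.sum_congr rfl fun c _ => Finset.sum_congr rfl fun a _ => by
      rw [rightExt_mulVec]
  have h2 : nsq x = ∑ c : γ, nsq (fun b => x (b, c)) := by
    unfold nsq
    rw [Fintype.sum_prod_type, Finset.sum_comm]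
  rw [h1, h2, Finset.mul_sum]
  exact Finset.sum_le_sum fun c _ => nsq_mulVec_le A _

lemma rightExt_conjTranspose [DecidableEq β] (A : Matrix α β ℂ) :
    (rightExt γ A)ᴴ = rightExt γ Aᴴ := by
  ext x y
  simp only [Matrix.conjTranspose_apply, rightExt, Matrix.of_apply]
  by_cases h : x.2 = y.2
  · rw [if_pos h.symm, if_pos h]
  · have h' : ¬ y.2 = x.2 := fun hh => h hh.symm
    rw [if_neg h', if_neg h, star_zero]

lemma submatrix_equiv_norm_le [DecidableEq β] (X : Matrix α β ℂ) (e : α' ≃ α) :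
    ‖X.submatrix e id‖ ≤ ‖X‖ := by
  refine norm_le_of_nsq _ _ (norm_nonneg _) fun x => ?_
  have h1 : nsq ((X.submatrix e id) *ᵥ x) = nsq (X *ᵥ x) := by
    unfold nsq
    exact Fintype.sum_equiv e _ _ fun i => by
      simp [Matrix.mulVec, dotProduct, Matrix.submatrix_apply]
  rw [h1]
  exact nsq_mulVec_le X x

end E
section T
variable {α γ : Type*} [Fintype α] [Fintype γ] [DecidableEq γ] [DecidableEq α]

lemma trace_ptraceSnd_eq (W : Matrix α α ℂ) (K : Matrix (α × γ) (α × γ) ℂ) :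
    (Wᴴ * ptraceSnd K).trace = ((rightExt γ W)ᴴ * K).trace := by
  rw [rightExt_conjTranspose]
  simp only [Matrix.trace, Matrix.diag, Matrix.mul_apply, ptraceSnd, rightExt,
    Matrix.of_apply, Matrix.conjTranspose_apply, Fintype.sum_prod_type,
    Finset.mul_sum, ite_mul, zero_mul]
  -- LHS : ∑ x ∑ y ∑ a, star (W y x) * K (y,a) (x,a)
  -- RHS : ∑ x ∑ a ∑ y ∑ b, ite (a = b) (star (W y x)) 0 * K (y,b) (x,a)
  refine Finset.sum_congr rfl fun x _ => ?_
  rw [Finset.sum_comm]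
  refine Finset.sum_congr rfl fun y _ => ?_
  refine Finset.sum_congr rfl fun a _ => ?_
  simp [Finset.sum_ite_eq]
end T

section Rep
variable {n m r k : ℕ}

def prodShuffle (m r k : ℕ) : (Fin m × Fin k) × Fin r ≃ (Fin m × Fin r) × Fin k where
  toFun x := ((x.1.1, x.2), x.1.2)
  invFun x := ((x.1.1, x.2), x.1.2)
  left_inv x := rfl
  right_inv x := rfl

lemma tensorId_rep (A B : Matrix (Fin m × Fin r) (Fin n) ℂ)
    (Φ : Matrix (Fin n) (Fin n) ℂ →ₗ[ℂ] Matrix (Fin m) (Fin m) ℂ)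
    (hΦ : ∀ X : Matrix (Fin n) (Fin n) ℂ, Φ X = ptraceSnd (A * X * Bᴴ))
    (M : Matrix (Fin n × Fin k) (Fin n × Fin k) ℂ) :
    tensorId (Fin k) Φ M =
      ptraceSnd (((rightExt (Fin k) A).submatrix (prodShuffle m r k) id) * M *
        ((rightExt (Fin k) B).submatrix (prodShuffle m r k) id)ᴴ) := by
  ext ⟨i, p⟩ ⟨j, q⟩
  show Φ (Matrix.of fun s t => M (s, p) (t, q)) i j = _
  rw [hΦ]
  simp only [ptraceSnd, Matrix.of_apply, Matrix.mul_apply, Matrix.conjTranspose_apply,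
    Matrix.submatrix_apply, rightExt, prodShuffle, Equiv.coe_fn_mk, id_eq,
    Fintype.sum_prod_type, ite_mul, zero_mul, mul_ite, mul_zero]
  refine Finset.sum_congr rfl fun a _ => ?_
  refine Finset.sum_congr rfl fun t _ => ?_
  have hst : ∀ x : Fin k, (star (if q = x then B (j, a) t else 0) : ℂ) =
      if q = x then star (B (j, a) t) else 0 := fun x => by
    split <;> simp
  simp only [hst, mul_ite, mul_zero, Finset.sum_ite_eq, Finset.mem_univ, if_true]

end Rep
end CBAux

/-- Upper bound on the completely bounded trace norm from a Stinespring pair. -/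
theorem cb_trace_norm_le_stinespring {n m r : ℕ}
    (A B : Matrix (Fin m × Fin r) (Fin n) ℂ)
    (Φ : Matrix (Fin n) (Fin n) ℂ →ₗ[ℂ] Matrix (Fin m) (Fin m) ℂ)
    (hΦ : ∀ X : Matrix (Fin n) (Fin n) ℂ, Φ X = ptraceSnd (A * X * Bᴴ)) :
    diamondNorm Φ ≤ specNorm A * specNorm B := by
  open scoped Matrix.Norms.L2Operator in
  open CBAux in
  have hsA : specNorm A = ‖A‖ := rfl
  have hsB : specNorm B = ‖B‖ := rfl
  have hABnn : (0:ℝ) ≤ specNorm A * specNorm B := by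
    rw [hsA, hsB]; exact mul_nonneg (norm_nonneg _) (norm_nonneg _)
  rw [diamondNorm]
  refine Real.iSup_le (fun k => ?_) hABnn
  rw [inducedTraceNorm]
  refine Real.sSup_le ?_ hABnn
  rintro x ⟨M, hM, rfl⟩
  have hrep := tensorId_rep A B Φ hΦ M
  set At := (rightExt (Fin (k+1)) A).submatrix (prodShuffle m r (k+1)) id with hAtdef
  set Bt := (rightExt (Fin (k+1)) B).submatrix (prodShuffle m r (k+1)) id with hBtdef
  have hAtn : ‖At‖ ≤ specNorm A := by
    rw [hsA]
    exact le_trans (submatrix_equiv_norm_le _ _) (rightExt_norm_le A)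
  have hBtn : ‖Bt‖ ≤ specNorm B := by
    rw [hsB]
    exact le_trans (submatrix_equiv_norm_le _ _) (rightExt_norm_le B)
  obtain ⟨V, hV1, hV2, hV3⟩ := polar M
  set N := tensorId (Fin (k+1)) Φ M with hNdef
  obtain ⟨W, hW1, hW2, hW3⟩ := polar N
  set S := (Matrix.posSemidef_conjTranspose_mul_self M).sqrt with hSdef
  have hSpsd : S.PosSemidef := by
    have hd : (diagonal ((↑) ∘ (√·) ∘ (Matrix.posSemidef_conjTranspose_mul_self M).1.eigenvalues) :
        Matrix (Fin n × Fin (k+1)) (Fin n × Fin (k+1)) ℂ).PosSemidef :=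
      posSemidef_diagonal_iff.mpr fun i => Complex.zero_le_real.2 (Real.sqrt_nonneg _)
    exact hd.mul_mul_conjTranspose_same _
  set C := Btᴴ * ((rightExt (Fin r) W)ᴴ * (At * V)) with hCdef
  have h0 : traceNorm N = ((Wᴴ * N).trace).re := by
    rw [hW2]; rfl
  have h2 : (Wᴴ * N).trace = (C * S).trace := by
    calc (Wᴴ * N).trace = (Wᴴ * ptraceSnd (At * M * Btᴴ)).trace := by rw [← hrep]
      _ = ((rightExt (Fin r) W)ᴴ * (At * M * Btᴴ)).trace := trace_ptraceSnd_eq _ _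
      _ = ((rightExt (Fin r) W)ᴴ * (At * M) * Btᴴ).trace := by
          simp only [Matrix.mul_assoc]
      _ = (Btᴴ * ((rightExt (Fin r) W)ᴴ * (At * M))).trace := Matrix.trace_mul_comm _ _
      _ = (C * S).trace := by rw [hV3, hCdef]; simp only [Matrix.mul_assoc]
  have h3 : ‖((C * S).trace)‖ ≤ ‖C‖ * S.trace.re := hoelder C S hSpsd
  have hCn : ‖C‖ ≤ specNorm A * specNorm B := by
    have e2 : ‖(rightExt (Fin r) W)ᴴ‖ ≤ 1 := by
      rw [Matrix.l2_opNorm_conjTranspose]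
      exact le_trans (rightExt_norm_le W) hW1
    have e3 : ‖At * V‖ ≤ specNorm A := by
      calc ‖At * V‖ ≤ ‖At‖ * ‖V‖ := Matrix.l2_opNorm_mul _ _
        _ ≤ specNorm A * 1 := by
            apply mul_le_mul hAtn hV1 (norm_nonneg _)
            rw [hsA]; exact norm_nonneg _
        _ = specNorm A := mul_one _
    have e4 : ‖(rightExt (Fin r) W)ᴴ * (At * V)‖ ≤ specNorm A := by
      calc ‖(rightExt (Fin r) W)ᴴ * (At * V)‖
          ≤ ‖(rightExt (Fin r) W)ᴴ‖ * ‖At * V‖ := Matrix.l2_opNorm_mul _ _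
        _ ≤ 1 * specNorm A := by
            apply mul_le_mul e2 e3 (norm_nonneg _) zero_le_one
        _ = specNorm A := one_mul _
    calc ‖C‖ ≤ ‖Btᴴ‖ * ‖(rightExt (Fin r) W)ᴴ * (At * V)‖ := Matrix.l2_opNorm_mul _ _
      _ ≤ specNorm B * specNorm A := by
          rw [Matrix.l2_opNorm_conjTranspose]
          apply mul_le_mul hBtn e4 (norm_nonneg _)
          rw [hsB]; exact norm_nonneg _
      _ = specNorm A * specNorm B := mul_comm _ _
  have hStr : S.trace.re = traceNorm M := rfl
  have hfin : ‖C‖ * S.trace.re ≤ specNorm A * specNorm B := by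
    rw [hStr]
    have := mul_le_mul_of_nonneg_left hM (norm_nonneg C)
    rw [mul_one] at this
    linarith
  calc traceNorm N = ((Wᴴ * N).trace).re := h0
    _ ≤ ‖((Wᴴ * N).trace)‖ := Complex.re_le_norm _
    _ = ‖((C * S).trace)‖ := by rw [h2]
    _ ≤ ‖C‖ * S.trace.re := h3
    _ ≤ specNorm A * specNorm B := hfin

end
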